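/- Let n ≥ 1 and let M = (m_ij) be an n×n real matrix with strictly positive entries that is consistent, i.e. m_ij · m_jk · m_ki = 1 for all i, j, k. Define v ∈ ℝⁿ by v_i = (Π_{j=1}^{n} m_ij)^{1/n}. Then v is strictly positive and M · v = n · v, i.e. v is an eigenvector of M with eigenvalue n; consequently the rescaled principal-eigenvector ranking and the rescaled geometric-mean-of-rows ranking of M coincide. -/

import Mathlib

/-- For a consistent positive `n × n` matrix `M` (`n ≥ 1`), the vector
`v i = (∏ j, m i j) ^ (1/n)` of geometric means of rows is strictly positive and is an
eigenvector of `M` with eigenvalue `n`; consequently the rescaled principal-eigenvector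
ranking and the rescaled geometric-mean-of-rows ranking coincide: any positive eigenvector `w`
of `M` for the (principal) eigenvalue `n`, rescaled so that its entries sum to `1`, equals the
rescaled geometric-mean vector. -/
theorem consistent_geometric_mean_eigenvector
    (n : ℕ) (hn : 1 ≤ n)
    (m : Matrix (Fin n) (Fin n) ℝ)
    (hmpos : ∀ i j, 0 < m i j)
    (hcons : ∀ i j k : Fin n, m i j * m j k * m k i = 1) :
    (∀ i : Fin n, 0 < (∏ j, m i j) ^ ((1 : ℝ) / n)) ∧
      m.mulVec (fun i => (∏ j, m i j) ^ ((1 : ℝ) / n)) =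
        (n : ℝ) • (fun i => (∏ j, m i j) ^ ((1 : ℝ) / n)) ∧
      ∀ w : Fin n → ℝ, (∀ i, 0 < w i) →
        m.mulVec w = (n : ℝ) • w →
        (∑ i, w i)⁻¹ • w =
          (∑ i, (∏ j, m i j) ^ ((1 : ℝ) / n))⁻¹ •
            (fun i => (∏ j, m i j) ^ ((1 : ℝ) / n)) := by
  haveI : Nonempty (Fin n) := ⟨⟨0, hn⟩⟩
  have hn0 : (n : ℝ) ≠ 0 := Nat.cast_ne_zero.mpr (by omega)
  set v : Fin n → ℝ := fun i => (∏ j, m i j) ^ ((1 : ℝ) / n) with hv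
  have hppos : ∀ i, 0 < ∏ j, m i j := fun i => Finset.prod_pos (fun j _ => hmpos i j)
  have hvpos : ∀ i, 0 < v i := fun i => Real.rpow_pos_of_pos (hppos i) _
  have hdiag : ∀ i, m i i = 1 := by
    intro i
    have h := hcons i i i
    nlinarith [hmpos i i, sq_nonneg (m i i - 1), sq_nonneg (m i i + 1)]
  have hinv : ∀ i j, m i j * m j i = 1 := by
    intro i j
    have h := hcons i j j
    rwa [hdiag j, mul_one] at h
  have hsplit : ∀ i k j : Fin n, m i k * m k j = m i j := by
    intro i k j
    have h := hcons i k j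
    have h2 := hinv i j
    exact mul_right_cancel₀ (ne_of_gt (hmpos j i)) (h.trans h2.symm)
  have hmv : ∀ i k, v i = m i k * v k := by
    intro i k
    have hp : ∏ j, m i j = m i k ^ n * ∏ j, m k j := by
      calc ∏ j, m i j = ∏ j, m i k * m k j :=
            Finset.prod_congr rfl (fun j _ => (hsplit i k j).symm)
        _ = m i k ^ n * ∏ j, m k j := by
            rw [Finset.prod_mul_distrib, Finset.prod_const, Finset.card_univ, Fintype.card_fin]
    show (∏ j, m i j) ^ ((1 : ℝ) / n) = m i k * (∏ j, m k j) ^ ((1 : ℝ) / n)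
    rw [hp, Real.mul_rpow (pow_pos (hmpos i k) n).le (hppos k).le,
      ← Real.rpow_natCast (m i k) n, ← Real.rpow_mul (hmpos i k).le,
      mul_one_div_cancel hn0, Real.rpow_one]
  have heig : m.mulVec v = (n : ℝ) • v := by
    funext i
    simp only [Matrix.mulVec, dotProduct, Pi.smul_apply, smul_eq_mul]
    calc ∑ k, m i k * v k = ∑ _k : Fin n, v i :=
          Finset.sum_congr rfl (fun k _ => (hmv i k).symm)
      _ = (n : ℝ) * v i := by
          rw [Finset.sum_const, Finset.card_univ, Fintype.card_fin, nsmul_eq_mul]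
  refine ⟨hvpos, heig, ?_⟩
  intro w hw hew
  set S : ℝ := ∑ k, w k / v k with hSdef
  have hSpos : 0 < S :=
    Finset.sum_pos (fun k _ => div_pos (hw k) (hvpos k)) Finset.univ_nonempty
  have hS : ∀ i, (n : ℝ) * w i = v i * S := by
    intro i
    have h := congrFun hew i
    simp only [Matrix.mulVec, dotProduct, Pi.smul_apply, smul_eq_mul] at h
    rw [← h, hSdef, Finset.mul_sum]
    refine Finset.sum_congr rfl (fun k _ => ?_)
    have hik : m i k = v i / v k := by
      rw [eq_div_iff (ne_of_gt (hvpos k))]; exact (hmv i k).symm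
    rw [hik]
    field_simp
  have hw' : ∀ i, w i = (S / n) * v i := by
    intro i
    have h := hS i
    field_simp
    linarith [hS i]
  have hsumw : ∑ i, w i = (S / n) * ∑ i, v i := by
    rw [Finset.mul_sum]; exact Finset.sum_congr rfl (fun i _ => hw' i)
  have hsumv : 0 < ∑ i, v i := Finset.sum_pos (fun i _ => hvpos i) Finset.univ_nonempty
  funext i
  simp only [Pi.smul_apply, smul_eq_mul]
  rw [hw' i, hsumw, mul_inv]
  have hc : S / (n : ℝ) ≠ 0 := by positivity
  field_simp
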